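/- arXiv:1401.2639 — 3 statements merged into one kernel-verified Lean document; each statement's English description precedes it below -/
import Mathlib

section
/- Every function holomorphic on the punctured open unit ball {z ∈ ℂ² : 0 < ‖z‖ < 1} extends to a holomorphic function on the full open unit ball {z ∈ ℂ² : ‖z‖ < 1}. In particular, there is no holomorphic function of two complex variables with an isolated singularity at the origin of the unit ball (so the punctured ball is not a domain of holomorphy). -/
open Set Metric Complex MeasureTheory intervalIntegral ContinuousLinearMap Real Filter Topology
noncomputable section

def Spt : Set (ℂ × ℂ) := {q : ℂ × ℂ | q ≠ 0 ∧ ‖q.1‖ ^ 2 + ‖q.2‖ ^ 2 < 1}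

lemma isOpen_Spt : IsOpen Spt := by
  have h1 : IsOpen {q : ℂ × ℂ | q ≠ 0} := isOpen_compl_singleton
  have h2 : IsOpen {q : ℂ × ℂ | ‖q.1‖ ^ 2 + ‖q.2‖ ^ 2 < 1} :=
    isOpen_lt (by fun_prop) continuous_const
  exact h1.inter h2

lemma mem_Spt {q : ℂ × ℂ} (h0 : q ≠ 0) (h1 : ‖q.1‖ ^ 2 + ‖q.2‖ ^ 2 < 1) : q ∈ Spt := ⟨h0, h1⟩

def wmap (t : ℝ) : ℂ := circleMap 0 2⁻¹ t

lemma norm_wmap (t : ℝ) : ‖wmap t‖ = 2⁻¹ := by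
  simp [wmap, norm_circleMap_zero]

lemma wmap_ne (t : ℝ) : wmap t ≠ 0 := by
  intro h
  have := norm_wmap t
  rw [h] at this
  norm_num at this

lemma wmap_mem_Spt {t : ℝ} {b : ℂ} (hb : ‖b‖ < 2⁻¹) : (wmap t, b) ∈ Spt := by
  refine mem_Spt ?_ ?_
  · simp only [Prod.ext_iff, ne_eq, not_and_or]
    exact Or.inl (wmap_ne t)
  · have h : ‖(wmap t, b).1‖ = 2⁻¹ := norm_wmap t
    rw [h]
    have hb0 : (0:ℝ) ≤ ‖b‖ := norm_nonneg _
    nlinarith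

variable {g : ℂ × ℂ → ℂ}

lemma diffAt_g (hg : DifferentiableOn ℂ g Spt) {q : ℂ × ℂ} (hq : q ∈ Spt) :
    DifferentiableAt ℂ g q := hg.differentiableAt (isOpen_Spt.mem_nhds hq)

lemma slice2_hasDerivAt (hg : DifferentiableOn ℂ g Spt) {w b : ℂ} (h : (w, b) ∈ Spt) :
    HasDerivAt (fun y => g (w, y)) (fderiv ℂ g (w, b) (0, 1)) b :=
  ((diffAt_g hg h).hasFDerivAt).comp_hasDerivAt b ((hasDerivAt_const b w).prodMk (hasDerivAt_id b))

lemma slice2_diffAt (hg : DifferentiableOn ℂ g Spt) {w b : ℂ} (h : (w, b) ∈ Spt) :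
    DifferentiableAt ℂ (fun y => g (w, y)) b := (slice2_hasDerivAt hg h).differentiableAt

/-- Cauchy estimate for the second partial derivative on the circle. -/
lemma cauchy_est (hg : DifferentiableOn ℂ g Spt) {ε M τ : ℝ} (hε : 0 < ε) (hτ : τ < 2⁻¹)
    (hM : ∀ q ∈ (sphere (0:ℂ) 2⁻¹) ×ˢ closedBall (0:ℂ) τ, ‖g q‖ ≤ M)
    {t : ℝ} {b : ℂ} (hb : ‖b‖ + ε ≤ τ) :
    ‖deriv (fun y => g (wmap t, y)) b‖ ≤ M / ε := by
  refine Complex.norm_deriv_le_of_forall_mem_sphere_norm_le hε ?_ ?_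
  · refine DifferentiableOn.diffContOnCl ?_
    intro y hy
    have hy' : y ∈ closedBall b ε := closure_ball_subset_closedBall hy
    have hyn : ‖y‖ < 2⁻¹ := by
      have h1 := mem_closedBall_iff_norm.mp hy'
      have h2 : ‖y‖ ≤ ‖y - b‖ + ‖b‖ := by simpa using norm_add_le (y - b) b
      linarith
    exact (slice2_diffAt hg (wmap_mem_Spt hyn)).differentiableWithinAt
  · intro y hy
    have hy' : ‖y - b‖ = ε := mem_sphere_iff_norm.mp hy
    have hyn : ‖y‖ ≤ τ := by
      have h2 : ‖y‖ ≤ ‖y - b‖ + ‖b‖ := by simpa using norm_add_le (y - b) b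
      linarith
    exact hM (wmap t, y) ⟨by simpa using (norm_wmap t), by simpa [mem_closedBall_iff_norm] using hyn⟩

def Fint (g : ℂ × ℂ → ℂ) (p : ℂ × ℂ) (t : ℝ) : ℂ :=
  (wmap t * I) * ((wmap t - p.1)⁻¹ * g (wmap t, p.2))

def Dint (g : ℂ × ℂ → ℂ) (x : ℂ × ℂ) (t : ℝ) : (ℂ × ℂ) →L[ℂ] ℂ :=
  (wmap t * I) •
    ((wmap t - x.1)⁻¹ • ((fderiv ℂ g (wmap t, x.2) (0, 1)) • snd ℂ ℂ ℂ) +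
      (g (wmap t, x.2)) • ((-(((wmap t - x.1) ^ 2)⁻¹)) • (-(fst ℂ ℂ ℂ))))

lemma sub_ne_wmap {x : ℂ × ℂ} (hx1 : ‖x.1‖ < 2⁻¹) (t : ℝ) : wmap t - x.1 ≠ 0 := by
  intro h
  have h2 : wmap t = x.1 := by linear_combination h
  have h3 := norm_wmap t
  rw [h2] at h3
  rw [h3] at hx1
  exact lt_irrefl _ hx1

lemma hasFDerivAt_Fint (hg : DifferentiableOn ℂ g Spt) {x : ℂ × ℂ}
    (hx1 : ‖x.1‖ < 2⁻¹) (hx2 : ‖x.2‖ < 2⁻¹) (t : ℝ) :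
    HasFDerivAt (fun p => Fint g p t) (Dint g x t) x := by
  have hne : wmap t - x.1 ≠ 0 := sub_ne_wmap hx1 t
  have h1 : HasFDerivAt (fun p : ℂ × ℂ => (wmap t - p.1)⁻¹)
      ((-(((wmap t - x.1) ^ 2)⁻¹)) • (-(fst ℂ ℂ ℂ))) x := by
    have hb : HasFDerivAt (fun p : ℂ × ℂ => wmap t - p.1) (-(fst ℂ ℂ ℂ)) x :=
      (hasFDerivAt_fst).const_sub (wmap t)
    have := (hasDerivAt_inv hne).comp_hasFDerivAt x hb
    exact this
  have h2 : HasFDerivAt (fun p : ℂ × ℂ => g (wmap t, p.2))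
      ((fderiv ℂ g (wmap t, x.2) (0, 1)) • snd ℂ ℂ ℂ) x := by
    have hd := slice2_hasDerivAt hg (wmap_mem_Spt (t := t) hx2)
    have := hd.comp_hasFDerivAt (𝕜 := ℂ) x (hasFDerivAt_snd)
    exact this
  exact (h1.mul h2).const_mul (wmap t * I)

lemma norm_Dint_le (hg : DifferentiableOn ℂ g Spt) {ε M τ δ : ℝ}
    (hε : 0 < ε) (hτ : τ < 2⁻¹) (hδ : 0 < δ) (hM0 : 0 ≤ M)
    (hM : ∀ q ∈ (sphere (0:ℂ) 2⁻¹) ×ˢ closedBall (0:ℂ) τ, ‖g q‖ ≤ M)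
    {x : ℂ × ℂ} (hx1 : ‖x.1‖ + δ ≤ 2⁻¹) (hx2 : ‖x.2‖ + ε ≤ τ) (t : ℝ) :
    ‖Dint g x t‖ ≤ 2⁻¹ * (δ⁻¹ * (M / ε) + M * ((δ ^ 2)⁻¹)) := by
  set w := wmap t with hw
  have hx1' : ‖x.1‖ < 2⁻¹ := by linarith
  have hx2' : ‖x.2‖ < 2⁻¹ := by nlinarith [norm_nonneg x.2]
  set a := ‖w - x.1‖ with ha
  have haδ : δ ≤ a := by
    have h1 : ‖w‖ - ‖x.1‖ ≤ ‖w - x.1‖ := norm_sub_norm_le _ _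
    have h2 : ‖w‖ = 2⁻¹ := norm_wmap t
    simp only [ha]; linarith
  have ha0 : 0 < a := lt_of_lt_of_le hδ haδ
  -- the partial derivative bound
  have hfd : ‖fderiv ℂ g (w, x.2) (0, 1)‖ ≤ M / ε := by
    have heq : fderiv ℂ g (w, x.2) (0, 1) = deriv (fun y => g (w, y)) x.2 :=
      ((slice2_hasDerivAt hg (wmap_mem_Spt (t := t) hx2')).deriv).symm
    rw [heq]
    exact cauchy_est hg hε hτ hM hx2
  have hgb : ‖g (w, x.2)‖ ≤ M := by
    refine hM _ ⟨by simpa using norm_wmap t, ?_⟩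
    simp only [mem_closedBall_iff_norm, sub_zero]
    linarith
  have hWI : ‖w * I‖ = 2⁻¹ := by
    rw [norm_mul, Complex.norm_I, mul_one, norm_wmap]
  have e1 : ∀ (c : ℂ) (L : (ℂ × ℂ) →L[ℂ] ℂ), ‖c • L‖ = ‖c‖ * ‖L‖ := fun c L => norm_smul c L
  rw [Dint, ← hw, e1, hWI]
  have hsnd : ‖snd ℂ ℂ ℂ‖ ≤ 1 := norm_snd_le ℂ ℂ ℂ
  have hfst : ‖fst ℂ ℂ ℂ‖ ≤ 1 := norm_fst_le ℂ ℂ ℂ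
  gcongr 2⁻¹ * ?_
  calc ‖(w - x.1)⁻¹ • ((fderiv ℂ g (w, x.2) (0, 1)) • snd ℂ ℂ ℂ) +
        (g (w, x.2)) • ((-(((w - x.1) ^ 2)⁻¹)) • (-(fst ℂ ℂ ℂ)))‖
      ≤ ‖(w - x.1)⁻¹ • ((fderiv ℂ g (w, x.2) (0, 1)) • snd ℂ ℂ ℂ)‖ +
        ‖(g (w, x.2)) • ((-(((w - x.1) ^ 2)⁻¹)) • (-(fst ℂ ℂ ℂ)))‖ := norm_add_le _ _
    _ = a⁻¹ * (‖fderiv ℂ g (w, x.2) (0, 1)‖ * ‖snd ℂ ℂ ℂ‖) +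
        ‖g (w, x.2)‖ * ((a ^ 2)⁻¹ * ‖fst ℂ ℂ ℂ‖) := by
        simp only [e1, norm_smul, norm_neg, norm_inv, norm_pow, ← ha]
    _ ≤ δ⁻¹ * (M / ε * 1) + M * ((δ ^ 2)⁻¹ * 1) := by
        have h1 : a⁻¹ ≤ δ⁻¹ := by gcongr
        have h2 : (a ^ 2)⁻¹ ≤ (δ ^ 2)⁻¹ := by gcongr
        have hf0 : (0:ℝ) ≤ ‖fderiv ℂ g (w, x.2) (0, 1)‖ := norm_nonneg _
        have hMε : 0 ≤ M / ε := div_nonneg hM0 hε.le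
        gcongr
    _ = δ⁻¹ * (M / ε) + M * ((δ ^ 2)⁻¹) := by ring

lemma circle_mem_Spt {u b : ℂ} (hu : ‖u‖ = 2⁻¹) (hb : ‖b‖ < 2⁻¹) : (u, b) ∈ Spt := by
  refine mem_Spt ?_ ?_
  · simp only [Prod.ext_iff, ne_eq, not_and_or]
    refine Or.inl fun h => ?_
    rw [h] at hu; norm_num at hu
  · have hb0 : (0:ℝ) ≤ ‖b‖ := norm_nonneg _
    simp only [hu]
    nlinarith

lemma continuous_wmap : Continuous wmap := continuous_circleMap 0 2⁻¹

lemma continuous_Fint (hg : DifferentiableOn ℂ g Spt) {x : ℂ × ℂ}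
    (hx1 : ‖x.1‖ < 2⁻¹) (hx2 : ‖x.2‖ < 2⁻¹) : Continuous (fun t => Fint g x t) := by
  have c1 : Continuous fun t => wmap t * I := continuous_wmap.mul continuous_const
  have c2 : Continuous fun t => (wmap t - x.1)⁻¹ :=
    (continuous_wmap.sub continuous_const).inv₀ fun t => sub_ne_wmap hx1 t
  have c3 : Continuous fun t => g (wmap t, x.2) := by
    refine hg.continuousOn.comp_continuous
      (continuous_wmap.prodMk continuous_const) fun t => wmap_mem_Spt hx2
  exact c1.mul (c2.mul c3)

lemma meas_Dint (hg : DifferentiableOn ℂ g Spt) {x : ℂ × ℂ} (hx2 : ‖x.2‖ < 2⁻¹) :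
    Measurable (fun t => Dint g x t) := by
  have mw : Measurable wmap := continuous_wmap.measurable
  have mfd : Measurable fun t => fderiv ℂ g (wmap t, x.2) :=
    (measurable_fderiv ℂ g).comp ((continuous_wmap.prodMk continuous_const).measurable)
  have mfd1 : Measurable fun t => fderiv ℂ g (wmap t, x.2) ((0:ℂ), (1:ℂ)) :=
    ((ContinuousLinearMap.apply ℂ ℂ ((0:ℂ), (1:ℂ))).continuous.measurable).comp mfd
  have mg : Measurable fun t => g (wmap t, x.2) := by
    refine Continuous.measurable ?_
    exact hg.continuousOn.comp_continuous
      (continuous_wmap.prodMk continuous_const) fun t => wmap_mem_Spt hx2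
  refine Measurable.smul (mw.mul measurable_const) ?_
  refine Measurable.add ?_ ?_
  · exact ((mw.sub measurable_const).inv).smul (mfd1.smul measurable_const)
  · exact mg.smul (((mw.sub measurable_const).pow_const 2).inv.neg.smul measurable_const)

def Gex (g : ℂ × ℂ → ℂ) (p : ℂ × ℂ) : ℂ :=
  (2 * (π : ℂ) * I)⁻¹ • ∫ t in (0:ℝ)..(2 * π), Fint g p t

lemma diffAt_Gex (hg : DifferentiableOn ℂ g Spt) {p₀ : ℂ × ℂ}
    (h1 : ‖p₀.1‖ < 2⁻¹) (h2 : ‖p₀.2‖ < 2⁻¹) : DifferentiableAt ℂ (Gex g) p₀ := by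
  set ε : ℝ := min ((2⁻¹ - ‖p₀.1‖) / 4) ((2⁻¹ - ‖p₀.2‖) / 4) with hεdef
  have hε : 0 < ε := lt_min (by linarith) (by linarith)
  have hε1 : ε ≤ (2⁻¹ - ‖p₀.1‖) / 4 := min_le_left _ _
  have hε2 : ε ≤ (2⁻¹ - ‖p₀.2‖) / 4 := min_le_right _ _
  set δ : ℝ := 2⁻¹ - (‖p₀.1‖ + ε) with hδdef
  have hδ : 0 < δ := by simp only [hδdef]; linarith
  set τ : ℝ := ‖p₀.2‖ + 2 * ε with hτdef
  have hτ : τ < 2⁻¹ := by simp only [hτdef]; linarith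
  have hτ0 : 0 ≤ τ := by positivity
  -- bound for g on the compact set
  have hKsub : (sphere (0:ℂ) 2⁻¹) ×ˢ closedBall (0:ℂ) τ ⊆ Spt := by
    rintro ⟨u, b⟩ ⟨hu, hb⟩
    exact circle_mem_Spt (by simpa using hu)
      (lt_of_le_of_lt (by simpa [mem_closedBall_iff_norm] using hb) hτ)
  obtain ⟨M₀, hM₀⟩ := ((isCompact_sphere (0:ℂ) 2⁻¹).prod (isCompact_closedBall (0:ℂ) τ)
    ).exists_bound_of_continuousOn (hg.continuousOn.mono hKsub)
  set M : ℝ := max M₀ 0 with hMdef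
  have hM0 : 0 ≤ M := le_max_right _ _
  have hM : ∀ q ∈ (sphere (0:ℂ) 2⁻¹) ×ˢ closedBall (0:ℂ) τ, ‖g q‖ ≤ M :=
    fun q hq => le_trans (hM₀ q hq) (le_max_left _ _)
  -- memberships for x in the ball
  have hball : ∀ x ∈ ball p₀ ε, ‖x.1‖ + δ ≤ 2⁻¹ ∧ ‖x.2‖ + ε ≤ τ := by
    intro x hx
    have hd : ‖x - p₀‖ < ε := mem_ball_iff_norm.mp hx
    have hd1 : ‖x.1 - p₀.1‖ ≤ ‖x - p₀‖ := norm_fst_le (x - p₀)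
    have hd2 : ‖x.2 - p₀.2‖ ≤ ‖x - p₀‖ := norm_snd_le (x - p₀)
    have t1 : ‖x.1‖ ≤ ‖x.1 - p₀.1‖ + ‖p₀.1‖ := by simpa using norm_add_le (x.1 - p₀.1) p₀.1
    have t2 : ‖x.2‖ ≤ ‖x.2 - p₀.2‖ + ‖p₀.2‖ := by simpa using norm_add_le (x.2 - p₀.2) p₀.2
    constructor
    · simp only [hδdef]; linarith
    · simp only [hτdef]; linarith
  have hlt : ∀ x ∈ ball p₀ ε, ‖x.1‖ < 2⁻¹ ∧ ‖x.2‖ < 2⁻¹ := by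
    intro x hx
    obtain ⟨a1, a2⟩ := hball x hx
    exact ⟨by linarith, by nlinarith [norm_nonneg x.2]⟩
  have key : HasFDerivAt (fun x => ∫ t in (0:ℝ)..(2 * π), Fint g x t)
      (∫ t in (0:ℝ)..(2 * π), Dint g p₀ t) p₀ := by
    refine intervalIntegral.hasFDerivAt_integral_of_dominated_of_fderiv_le
      (bound := fun _ => 2⁻¹ * (δ⁻¹ * (M / ε) + M * ((δ ^ 2)⁻¹))) (ball_mem_nhds p₀ hε) ?_ ?_ ?_ ?_ ?_ ?_
    · filter_upwards [ball_mem_nhds p₀ hε] with x hx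
      exact (continuous_Fint hg (hlt x hx).1 (hlt x hx).2).aestronglyMeasurable
    · exact (continuous_Fint hg h1 h2).intervalIntegrable _ _
    · exact (meas_Dint hg h2).aestronglyMeasurable
    · refine Filter.Eventually.of_forall fun t _ x hx => ?_
      exact norm_Dint_le hg hε hτ hδ hM0 hM (hball x hx).1 (hball x hx).2 t
    · exact intervalIntegrable_const
    · refine Filter.Eventually.of_forall fun t _ x hx => ?_
      exact hasFDerivAt_Fint hg (hlt x hx).1 (hlt x hx).2 t
  exact (key.differentiableAt).const_smul ((2 * (π : ℂ) * I)⁻¹)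

lemma Gex_eq_circleIntegral (g : ℂ × ℂ → ℂ) (p : ℂ × ℂ) :
    Gex g p = (2 * (π : ℂ) * I)⁻¹ • ∮ z in C(0, 2⁻¹), (z - p.1)⁻¹ • g (z, p.2) := by
  simp only [Gex, circleIntegral, deriv_circleMap, Fint, wmap, smul_eq_mul, mul_assoc]

lemma mem_Spt_snd_ne {z b : ℂ} (hb : b ≠ 0) (hz : ‖z‖ ≤ 2⁻¹) (hbn : ‖b‖ < 2⁻¹) :
    (z, b) ∈ Spt := by
  refine mem_Spt ?_ ?_
  · simp only [Prod.ext_iff, ne_eq, not_and_or]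
    exact Or.inr hb
  · have h1 : (0:ℝ) ≤ ‖z‖ := norm_nonneg _
    have h2 : (0:ℝ) ≤ ‖b‖ := norm_nonneg _
    nlinarith

lemma Gex_eq_of_snd_ne (hg : DifferentiableOn ℂ g Spt) {p : ℂ × ℂ}
    (h1 : ‖p.1‖ < 2⁻¹) (h2 : ‖p.2‖ < 2⁻¹) (h0 : p.2 ≠ 0) : Gex g p = g p := by
  rw [Gex_eq_circleIntegral]
  have key := Complex.two_pi_I_inv_smul_circleIntegral_sub_inv_smul_of_differentiable_on_off_countable
    (f := fun z => g (z, p.2)) (c := 0) (R := 2⁻¹) (w := p.1) (s := ∅)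
    Set.countable_empty (by simpa [mem_ball_zero_iff] using h1) ?_ ?_
  · simpa using key
  · refine (hg.continuousOn.comp ((continuous_id.prodMk continuous_const).continuousOn) ?_)
    intro z hz
    exact mem_Spt_snd_ne h0 (by simpa [mem_closedBall_iff_norm] using hz) h2
  · intro x hx
    have hxS : (x, p.2) ∈ Spt :=
      mem_Spt_snd_ne h0 (le_of_lt (by simpa [mem_ball_zero_iff] using hx.1)) h2
    exact (diffAt_g hg hxS).comp x (differentiableAt_id.prodMk (differentiableAt_const _))

lemma Gex_eq_of_ne_zero (hg : DifferentiableOn ℂ g Spt) {p : ℂ × ℂ}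
    (h0 : p ≠ 0) (h1 : ‖p.1‖ < 2⁻¹) (h2 : ‖p.2‖ < 2⁻¹) : Gex g p = g p := by
  by_cases hb : p.2 = 0
  · -- limiting argument along the second coordinate
    have ha : p.1 ≠ 0 := by
      intro h
      exact h0 (Prod.ext h hb)
    have hpS : p ∈ Spt := by
      refine mem_Spt h0 ?_
      have : ‖p.2‖ = 0 := by rw [hb]; simp
      rw [this]
      have := norm_nonneg p.1
      nlinarith
    have hGc : ContinuousAt (Gex g) p := (diffAt_Gex hg h1 h2).continuousAt
    have hgc : ContinuousAt g p := (diffAt_g hg hpS).continuousAt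
    have hmap : Tendsto (fun b : ℂ => (p.1, b)) (𝓝[≠] (0:ℂ)) (𝓝 p) := by
      have h' : Tendsto (fun b : ℂ => (p.1, b)) (𝓝 (0:ℂ)) (𝓝 (p.1, (0:ℂ))) :=
        (continuous_const.prodMk continuous_id).tendsto 0
      have hp : (p.1, (0:ℂ)) = p := Prod.ext rfl hb.symm
      rw [hp] at h'
      exact h'.mono_left nhdsWithin_le_nhds
    have t1 : Tendsto (fun b : ℂ => Gex g (p.1, b)) (𝓝[≠] (0:ℂ)) (𝓝 (Gex g p)) :=
      hGc.tendsto.comp hmap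
    have t2 : Tendsto (fun b : ℂ => g (p.1, b)) (𝓝[≠] (0:ℂ)) (𝓝 (g p)) :=
      hgc.tendsto.comp hmap
    have ev : ∀ᶠ b in 𝓝[≠] (0:ℂ), Gex g (p.1, b) = g (p.1, b) := by
      have hsmall : ∀ᶠ b in 𝓝 (0:ℂ), ‖b‖ < 2⁻¹ := by
        have := Metric.ball_mem_nhds (0:ℂ) (show (0:ℝ) < 2⁻¹ by norm_num)
        filter_upwards [this] with b hbb
        simpa [mem_ball_zero_iff] using hbb
      filter_upwards [self_mem_nhdsWithin, hsmall.filter_mono nhdsWithin_le_nhds] with b hb1 hb2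
      exact Gex_eq_of_snd_ne hg h1 hb2 hb1
    exact tendsto_nhds_unique (t1.congr' ev) t2
  · exact Gex_eq_of_snd_ne hg h1 h2 hb

theorem aux (hg : DifferentiableOn ℂ g Spt) :
    DifferentiableOn ℂ (Gex g) {q : ℂ × ℂ | ‖q.1‖ < 2⁻¹ ∧ ‖q.2‖ < 2⁻¹} ∧
      ∀ q : ℂ × ℂ, q ≠ 0 → ‖q.1‖ < 2⁻¹ → ‖q.2‖ < 2⁻¹ → Gex g q = g q :=
  ⟨fun p hp => (diffAt_Gex hg hp.1 hp.2).differentiableWithinAt,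
   fun _ h0 h1 h2 => Gex_eq_of_ne_zero hg h0 h1 h2⟩
def Pmap : EuclideanSpace ℂ (Fin 2) →L[ℂ] ℂ × ℂ :=
  (EuclideanSpace.proj 0).prod (EuclideanSpace.proj 1)

def Qmap : ℂ × ℂ →L[ℂ] EuclideanSpace ℂ (Fin 2) :=
  ((EuclideanSpace.equiv (Fin 2) ℂ).symm.toContinuousLinearMap).comp
    (ContinuousLinearMap.pi ![fst ℂ ℂ ℂ, snd ℂ ℂ ℂ])

lemma Qmap_apply_zero (q : ℂ × ℂ) : Qmap q 0 = q.1 := by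
  simp [Qmap, ContinuousLinearMap.pi_apply]

lemma Qmap_apply_one (q : ℂ × ℂ) : Qmap q 1 = q.2 := by
  simp [Qmap, ContinuousLinearMap.pi_apply]

lemma Pmap_apply (z : EuclideanSpace ℂ (Fin 2)) : Pmap z = (z 0, z 1) := rfl

lemma PQ (q : ℂ × ℂ) : Pmap (Qmap q) = q := by
  rw [Pmap_apply, Qmap_apply_zero, Qmap_apply_one]

lemma QP (z : EuclideanSpace ℂ (Fin 2)) : Qmap (Pmap z) = z := by
  ext i
  fin_cases i
  · show Qmap (Pmap z) 0 = z 0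
    rw [Pmap_apply, Qmap_apply_zero]
  · show Qmap (Pmap z) 1 = z 1
    rw [Pmap_apply, Qmap_apply_one]

lemma normE (z : EuclideanSpace ℂ (Fin 2)) : ‖z‖ ^ 2 = ‖z 0‖ ^ 2 + ‖z 1‖ ^ 2 := by
  rw [EuclideanSpace.norm_eq]
  rw [Real.sq_sqrt (by positivity)]
  simp [Fin.sum_univ_two]

/-- Every function holomorphic on the punctured open unit ball
`{z ∈ ℂ² : 0 < ‖z‖ < 1}` extends to a holomorphic function on the full open unit ball
`{z ∈ ℂ² : ‖z‖ < 1}`; in particular holomorphic functions of two complex variables have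
no isolated singularities. -/
theorem extend_across_puncture
    (f : EuclideanSpace ℂ (Fin 2) → ℂ)
    (hf : DifferentiableOn ℂ f {z : EuclideanSpace ℂ (Fin 2) | 0 < ‖z‖ ∧ ‖z‖ < 1}) :
    ∃ F : EuclideanSpace ℂ (Fin 2) → ℂ,
      DifferentiableOn ℂ F {z : EuclideanSpace ℂ (Fin 2) | ‖z‖ < 1} ∧
      Set.EqOn F f {z : EuclideanSpace ℂ (Fin 2) | 0 < ‖z‖ ∧ ‖z‖ < 1} := by
  classical
  have hΩopen : IsOpen {z : EuclideanSpace ℂ (Fin 2) | 0 < ‖z‖ ∧ ‖z‖ < 1} :=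
    (isOpen_lt continuous_const continuous_norm).inter (isOpen_lt continuous_norm continuous_const)
  -- transfer f to two variables
  set g : ℂ × ℂ → ℂ := fun q => f (Qmap q) with hgdef
  have hmaps : ∀ q ∈ Spt, Qmap q ∈ {z : EuclideanSpace ℂ (Fin 2) | 0 < ‖z‖ ∧ ‖z‖ < 1} := by
    rintro q ⟨hq0, hq1⟩
    have hne : Qmap q ≠ 0 := by
      intro h
      apply hq0
      have := congrArg Pmap h
      rwa [PQ, map_zero] at this
    have hnorm : ‖Qmap q‖ ^ 2 = ‖q.1‖ ^ 2 + ‖q.2‖ ^ 2 := by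
      rw [normE, Qmap_apply_zero, Qmap_apply_one]
    constructor
    · exact norm_pos_iff.mpr hne
    · nlinarith [norm_nonneg (Qmap q)]
  have hgd : DifferentiableOn ℂ g Spt := by
    exact hf.comp (Qmap.differentiable.differentiableOn) hmaps
  -- the coordinate bound
  have hcoord : ∀ (z : EuclideanSpace ℂ (Fin 2)), ‖z 0‖ ≤ ‖z‖ ∧ ‖z 1‖ ≤ ‖z‖ := by
    intro z
    have h := normE z
    constructor
    · nlinarith [norm_nonneg (z 0), norm_nonneg (z 1), norm_nonneg z]
    · nlinarith [norm_nonneg (z 0), norm_nonneg (z 1), norm_nonneg z]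
  refine ⟨fun z => if z = 0 then Gex g 0 else f z, ?_, ?_⟩
  · intro z hz
    by_cases hz0 : z = 0
    · -- differentiability at the origin, via Gex
      subst hz0
      have hG0 : DifferentiableAt ℂ (Gex g) (Pmap 0) := by
        rw [map_zero]
        exact diffAt_Gex hgd (by norm_num) (by norm_num)
      have hG : DifferentiableAt ℂ (fun y => Gex g (Pmap y)) 0 :=
        hG0.comp 0 (Pmap.differentiable.differentiableAt)
      have hev : (fun z => if z = 0 then Gex g 0 else f z) =ᶠ[𝓝 (0 : EuclideanSpace ℂ (Fin 2))]
          (fun y => Gex g (Pmap y)) := by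
        filter_upwards [Metric.ball_mem_nhds (0 : EuclideanSpace ℂ (Fin 2))
          (show (0:ℝ) < 2⁻¹ by norm_num)] with y hy
        rw [mem_ball_zero_iff] at hy
        by_cases hy0 : y = 0
        · subst hy0
          simp
        · rw [if_neg hy0]
          have hPy0 : Pmap y ≠ 0 := by
            intro h
            apply hy0
            have := congrArg Qmap h
            rwa [QP, map_zero] at this
          have hc := hcoord y
          have h1 : ‖(Pmap y).1‖ < 2⁻¹ := by
            rw [Pmap_apply]; exact lt_of_le_of_lt hc.1 hy
          have h2 : ‖(Pmap y).2‖ < 2⁻¹ := by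
            rw [Pmap_apply]; exact lt_of_le_of_lt hc.2 hy
          rw [Gex_eq_of_ne_zero hgd hPy0 h1 h2]
          show f y = g (Pmap y)
          rw [hgdef]
          simp only []
          rw [QP]
      exact ((hev.differentiableAt_iff).mpr hG).differentiableWithinAt
    · -- away from the origin, agrees with f
      have hzΩ : z ∈ {z : EuclideanSpace ℂ (Fin 2) | 0 < ‖z‖ ∧ ‖z‖ < 1} :=
        ⟨norm_pos_iff.mpr hz0, hz⟩
      have hfz : DifferentiableAt ℂ f z := hf.differentiableAt (hΩopen.mem_nhds hzΩ)
      have hev : (fun z => if z = 0 then Gex g 0 else f z) =ᶠ[𝓝 z] f := by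
        filter_upwards [isOpen_compl_singleton.mem_nhds
          (show z ∈ ({0}ᶜ : Set (EuclideanSpace ℂ (Fin 2))) from hz0)] with w hw
        rw [if_neg (by simpa using hw)]
      exact ((hev.differentiableAt_iff).mpr hfz).differentiableWithinAt
  · rintro z ⟨hz0, _⟩
    have : z ≠ 0 := by
      intro h
      rw [h] at hz0
      simp at hz0
    simp only [if_neg this]
end
end

section
/- (Poincaré.) There is no biholomorphic map from the open unit ball B onto the open polydisc P in ℂ²: there exists no bijection φ : B → P such that φ is holomorphic on B and φ⁻¹ is holomorphic on P. -/
open Complex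

open Metric Set

/-- The open unit ball in `ℂ²`. -/
def unitBallC2 : Set (ℂ × ℂ) := {z | ‖z.1‖ ^ 2 + ‖z.2‖ ^ 2 < 1}

/-- The open unit polydisc in `ℂ²`. -/
def polydiscC2 : Set (ℂ × ℂ) := {z | ‖z.1‖ < 1 ∧ ‖z.2‖ < 1}

/-- A holomorphic map from the unit disc into the unit ball of `ℂ²` whose values all have
norm close to `1` is nearly constant: a quantitative "no analytic discs in the sphere". -/
lemma slice_flat {h : ℂ → ℂ × ℂ} {δ : ℝ}
    (hd : DifferentiableOn ℂ h (ball 0 1))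
    (hlt : ∀ z ∈ ball (0:ℂ) 1, ‖(h z).1‖ ^ 2 + ‖(h z).2‖ ^ 2 < 1)
    (hgt : ∀ z ∈ ball (0:ℂ) 1, 1 - δ < ‖(h z).1‖ ^ 2 + ‖(h z).2‖ ^ 2) :
    ‖((h (1/2)).1 - (h 0).1)‖ ^ 2 + ‖((h (1/2)).2 - (h 0).2)‖ ^ 2
      ≤ 6 * δ := by
  have h0mem : (0:ℂ) ∈ ball (0:ℂ) 1 := by simp
  have h12mem : (1/2 : ℂ) ∈ ball (0:ℂ) 1 := by
    rw [mem_ball_zero_iff]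
    simp [norm_div]
    norm_num
  set c1 := (h 0).1 with hc1
  set c2 := (h 0).2 with hc2
  set F : ℂ → ℂ := fun z => (h z).1 * (starRingEnd ℂ) c1 + (h z).2 * (starRingEnd ℂ) c2 with hF
  set Nc : ℝ := ‖c1‖ ^ 2 + ‖c2‖ ^ 2 with hNc
  have hNc0 : 0 ≤ Nc := by positivity
  have hNc1 : Nc < 1 := hlt 0 h0mem
  have hNcδ : 1 - δ < Nc := hgt 0 h0mem
  set aR : ℝ := 1 - Nc with haR
  have haR0 : 0 < aR := by rw [haR]; linarith
  have haRδ : aR < δ := by rw [haR]; linarith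
  -- F 0 is the real number Nc
  have hF0 : F 0 = (Nc : ℂ) := by
    simp only [hF]
    rw [Complex.mul_conj, Complex.mul_conj, hNc, Complex.sq_norm, Complex.sq_norm]
    push_cast
    ring
  -- Cauchy-Schwarz : abs (F z) < 1 on the ball
  have habsF : ∀ z ∈ ball (0:ℂ) 1, ‖(F z)‖ < 1 := by
    intro z hz
    have h1 : ‖(F z)‖ ≤ ‖(h z).1‖ * ‖c1‖
        + ‖(h z).2‖ * ‖c2‖ := by
      refine (norm_add_le _ _).trans ?_
      simp [norm_mul]
    have h2 := hlt z hz
    have a1 := norm_nonneg (h z).1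
    have a2 := norm_nonneg (h z).2
    have b1 := norm_nonneg c1
    have b2 := norm_nonneg c2
    nlinarith [sq_nonneg (‖(h z).1‖ * ‖c2‖ - ‖(h z).2‖ * ‖c1‖),
      norm_nonneg (F z), sq_nonneg (‖(h z).1‖ - ‖c1‖)]
  -- the function H = 1 - F has positive real part
  have hReH : ∀ z ∈ ball (0:ℂ) 1, 0 < (1 - F z).re := by
    intro z hz
    have := habsF z hz
    have hre : (F z).re ≤ ‖(F z)‖ := Complex.re_le_norm _
    simp only [Complex.sub_re, Complex.one_re]
    linarith
  have hden : ∀ z ∈ ball (0:ℂ) 1, (1 - F z) + (aR:ℂ) ≠ 0 := by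
    intro z hz hc
    have h1 := hReH z hz
    have h2 : ((1 - F z) + (aR:ℂ)).re = (1 - F z).re + aR := by simp
    rw [hc] at h2
    simp only [Complex.zero_re] at h2
    linarith
  set G : ℂ → ℂ := fun z => ((1 - F z) - (aR:ℂ)) / ((1 - F z) + (aR:ℂ)) with hG
  -- differentiability
  have hdF : DifferentiableOn ℂ F (ball 0 1) := by
    apply DifferentiableOn.add
    · exact (hd.fst).mul_const _
    · exact (hd.snd).mul_const _
  have hdG : DifferentiableOn ℂ G (ball 0 1) := by
    apply DifferentiableOn.div
    · exact ((differentiableOn_const _).sub hdF).sub (differentiableOn_const _)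
    · exact ((differentiableOn_const _).sub hdF).add (differentiableOn_const _)
    · exact hden
  -- G maps the ball to the ball
  have hGmaps : MapsTo G (ball (0:ℂ) 1) (ball (0:ℂ) 1) := by
    intro z hz
    rw [mem_ball_zero_iff, hG]
    have hd0 := hden z hz
    have hpos : 0 < ‖((1 - F z) + (aR:ℂ))‖ := norm_pos_iff.mpr hd0
    rw [norm_div, div_lt_one hpos]
    have hkey : Complex.normSq ((1 - F z) + (aR:ℂ)) - Complex.normSq ((1 - F z) - (aR:ℂ))
        = 4 * aR * (1 - F z).re := by
      simp [Complex.normSq_apply, Complex.add_re, Complex.add_im, Complex.sub_re,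
        Complex.sub_im, Complex.ofReal_re, Complex.ofReal_im]
      ring
    have hre := hReH z hz
    have hlt2 : Complex.normSq ((1 - F z) - (aR:ℂ)) < Complex.normSq ((1 - F z) + (aR:ℂ)) := by
      nlinarith
    rw [← Complex.sq_norm, ← Complex.sq_norm] at hlt2
    exact lt_of_pow_lt_pow_left₀ 2 (norm_nonneg _) hlt2
  have hG0 : G 0 = 0 := by
    rw [hG]
    simp only [hF0]
    rw [show ((1:ℂ) - (Nc:ℂ)) - (aR:ℂ) = 0 by push_cast [haR]; ring]
    simp
  -- Schwarz lemma
  have hSch : ‖(G (1/2))‖ ≤ 1/2 := by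
    have := Complex.norm_le_norm_of_mapsTo_ball hdG (hGmaps.mono_right ball_subset_closedBall) hG0
      (z := 1/2) (by simpa using mem_ball_zero_iff.mp h12mem)
    calc ‖(G (1/2))‖ ≤ ‖(1/2 : ℂ)‖ := this
    _ = 1/2 := by rw [norm_div, norm_one, Complex.norm_two]
  -- bound on H(1/2)
  set w : ℂ := 1 - F (1/2) with hw
  set G12 : ℂ := G (1/2) with hG12
  have hdn := hden (1/2) h12mem
  have hkey : w * (1 - G12) = (aR:ℂ) * (1 + G12) := by
    have h1 : G12 * (w + (aR:ℂ)) = w - (aR:ℂ) := by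
      rw [hG12, hG, hw]
      field_simp
    linear_combination -h1
  have hub : ‖(1 + G12)‖ ≤ 3/2 := by
    calc ‖(1 + G12)‖ ≤ ‖1‖ + ‖G12‖ := norm_add_le _ _
    _ ≤ 3/2 := by rw [norm_one]; linarith
  have hlb : 1/2 ≤ ‖(1 - G12)‖ := by
    have : ‖(1:ℂ)‖ ≤ ‖(1 - G12)‖ + ‖G12‖ := by
      calc ‖(1:ℂ)‖ = ‖((1 - G12) + G12)‖ := by ring_nf
      _ ≤ _ := norm_add_le _ _
    rw [norm_one] at this
    linarith
  have habsw : ‖w‖ ≤ 3 * aR := by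
    have h1 : ‖w‖ * ‖(1 - G12)‖ = aR * ‖(1 + G12)‖ := by
      rw [← norm_mul, hkey, norm_mul, Complex.norm_real, Real.norm_eq_abs, abs_of_pos haR0]
    nlinarith [norm_nonneg w]
  -- real part of F (1/2)
  have hReF12 : 1 - 3*aR ≤ (F (1/2)).re := by
    have h1 : w.re ≤ ‖w‖ := Complex.re_le_norm _
    have h2 : w.re = 1 - (F (1/2)).re := by rw [hw]; simp
    linarith
  -- expand the norm of the difference
  have hexp : ‖((h (1/2)).1 - c1)‖ ^ 2 + ‖((h (1/2)).2 - c2)‖ ^ 2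
      = (‖(h (1/2)).1‖ ^ 2 + ‖(h (1/2)).2‖ ^ 2) + Nc
        - 2 * (F (1/2)).re := by
    rw [Complex.sq_norm, Complex.sq_norm, Complex.normSq_sub, Complex.normSq_sub]
    rw [hF]
    simp only [Complex.add_re, hNc, Complex.sq_norm]
    ring
  have hN12 : ‖(h (1/2)).1‖ ^ 2 + ‖(h (1/2)).2‖ ^ 2 < 1 :=
    hlt _ h12mem
  rw [hexp]
  linarith

/-- As a point of the polydisc approaches the boundary in the second coordinate, its image
under the inverse of a biholomorphism from the ball approaches the unit sphere. -/
lemma escape {φ ψ : ℂ × ℂ → ℂ × ℂ} (hφd : DifferentiableOn ℂ φ unitBallC2)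
    (hφm : Set.MapsTo φ unitBallC2 polydiscC2)
    (hφψ : ∀ w ∈ polydiscC2, φ (ψ w) = w) {δ : ℝ} (hδ0 : 0 < δ) (hδ1 : δ ≤ 1) :
    ∃ M : ℝ, 0 ≤ M ∧ M < 1 ∧ ∀ p ∈ polydiscC2, M < ‖p.2‖ →
      1 - δ < ‖(ψ p).1‖ ^ 2 + ‖(ψ p).2‖ ^ 2 := by
  set K : Set (ℂ × ℂ) := {q | ‖q.1‖ ^ 2 + ‖q.2‖ ^ 2 ≤ 1 - δ} with hK
  have hKB : K ⊆ unitBallC2 := by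
    intro q hq
    have h1 : ‖q.1‖ ^ 2 + ‖q.2‖ ^ 2 ≤ 1 - δ := hq
    show ‖q.1‖ ^ 2 + ‖q.2‖ ^ 2 < 1
    linarith
  have hcont : Continuous fun q : ℂ × ℂ => ‖q.1‖ ^ 2 + ‖q.2‖ ^ 2 := by
    apply Continuous.add
    · exact (continuous_norm.comp continuous_fst).pow 2
    · exact (continuous_norm.comp continuous_snd).pow 2
  have hKclosed : IsClosed K := isClosed_le hcont continuous_const
  have hKbdd : Bornology.IsBounded K := by
    apply (Metric.isBounded_closedBall (x := (0 : ℂ × ℂ)) (r := 1)).subset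
    intro q hq
    have h1 : ‖q.1‖ ^ 2 + ‖q.2‖ ^ 2 ≤ 1 - δ := hq
    rw [Metric.mem_closedBall, dist_zero_right, Prod.norm_def]
    have a1 := norm_nonneg q.1
    have a2 := norm_nonneg q.2
    apply max_le <;> nlinarith
  have hKcompact : IsCompact K := Metric.isCompact_of_isClosed_isBounded hKclosed hKbdd
  have hK0 : ((0 : ℂ), (0 : ℂ)) ∈ K := by
    simp only [hK, Set.mem_setOf_eq, norm_zero]
    norm_num
    linarith
  have himg : IsCompact (φ '' K) := hKcompact.image_of_continuousOn (hφd.continuousOn.mono hKB)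
  obtain ⟨p0, hp0mem, hp0max⟩ := himg.exists_isMaxOn ⟨φ (0, 0), Set.mem_image_of_mem φ hK0⟩
    ((continuous_norm.comp continuous_snd).continuousOn)
  refine ⟨‖p0.2‖, norm_nonneg _, ?_, ?_⟩
  · obtain ⟨k, hk, rfl⟩ := hp0mem
    exact (hφm (hKB hk)).2
  · intro p hp hM
    by_contra hcon
    push_neg at hcon
    have hpK : ψ p ∈ K := hcon
    have : p ∈ φ '' K := by
      rw [← hφψ p hp]
      exact Set.mem_image_of_mem φ hpK
    exact absurd (hp0max this) (not_le.mpr hM)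

/-- **Poincaré.** There is no biholomorphic map from the open unit ball onto the open
polydisc in `ℂ²`: no map `φ`, holomorphic on `B` with a holomorphic inverse `ψ` on `P`,
carries `B` bijectively onto `P`. -/
theorem no_biholomorphism_ball_polydisc :
    ¬ ∃ (φ ψ : ℂ × ℂ → ℂ × ℂ),
        DifferentiableOn ℂ φ unitBallC2 ∧
        DifferentiableOn ℂ ψ polydiscC2 ∧
        Set.MapsTo φ unitBallC2 polydiscC2 ∧
        Set.MapsTo ψ polydiscC2 unitBallC2 ∧
        (∀ z ∈ unitBallC2, ψ (φ z) = z) ∧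
        (∀ w ∈ polydiscC2, φ (ψ w) = w) := by
  rintro ⟨φ, ψ, hφd, hψd, hφm, hψm, hψφ, hφψ⟩
  have habs12 : ‖(1/2 : ℂ)‖ = 1/2 := by
    rw [norm_div, norm_one, Complex.norm_two]
  have h12lt : ‖(1/2 : ℂ)‖ < 1 := by rw [habs12]; norm_num
  have h0lt : ‖(0 : ℂ)‖ < 1 := by simpa using zero_lt_one
  -- slices in the first variable
  have hslice1 : ∀ w : ℂ, ‖w‖ < 1 →
      DifferentiableOn ℂ (fun z => ψ (z, w)) (ball (0:ℂ) 1) := by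
    intro w hw
    have : DifferentiableOn ℂ (ψ ∘ fun z : ℂ => (z, w)) (ball 0 1) := by
      apply DifferentiableOn.comp hψd
      · exact (differentiable_id.prodMk (differentiable_const w)).differentiableOn
      · intro z hz
        rw [mem_ball_zero_iff] at hz
        exact ⟨hz, hw⟩
    exact this
  -- slices in the second variable
  have hslice2 : ∀ z : ℂ, ‖z‖ < 1 →
      DifferentiableOn ℂ (fun w => ψ (z, w)) (ball (0:ℂ) 1) := by
    intro z hz
    have : DifferentiableOn ℂ (ψ ∘ fun w : ℂ => (z, w)) (ball 0 1) := by
      apply DifferentiableOn.comp hψd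
      · exact ((differentiable_const z).prodMk differentiable_id).differentiableOn
      · intro w hw
        rw [mem_ball_zero_iff] at hw
        exact ⟨hz, hw⟩
    exact this
  have bound : ∀ ε : ℝ, 0 < ε →
      ‖((ψ (1/2, 0)).1 - (ψ (0, 0)).1)‖ ≤ ε ∧
      ‖((ψ (1/2, 0)).2 - (ψ (0, 0)).2)‖ ≤ ε := by
    intro ε hε
    set δ : ℝ := min (ε^2/6) 1 with hδdef
    have hδ0 : 0 < δ := lt_min (by positivity) one_pos
    have hδε : 6 * δ ≤ ε^2 := by
      have := min_le_left (ε^2/6) 1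
      have h6 : δ ≤ ε^2/6 := this
      linarith
    obtain ⟨M, hM0, hM1, hMesc⟩ := escape hφd hφm hφψ hδ0 (min_le_right _ _)
    set r : ℝ := (M+1)/2 with hr
    have hr0 : 0 < r := by rw [hr]; linarith
    have hr1 : r < 1 := by rw [hr]; linarith
    have hMr : M < r := by rw [hr]; linarith
    have hfront : ∀ w ∈ frontier (ball (0:ℂ) r),
        ‖((ψ (1/2, w)).1 - (ψ (0, w)).1)‖ ≤ ε ∧
        ‖((ψ (1/2, w)).2 - (ψ (0, w)).2)‖ ≤ ε := by
      intro w hw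
      rw [frontier_ball 0 (ne_of_gt hr0), mem_sphere_iff_norm, sub_zero] at hw
      have hw1 : ‖w‖ < 1 := by rw [hw]; exact hr1
      have key := slice_flat (h := fun z => ψ (z, w)) (δ := δ) (hslice1 w hw1)
        (fun z hz => by
          rw [mem_ball_zero_iff] at hz
          exact hψm ⟨hz, hw1⟩)
        (fun z hz => by
          rw [mem_ball_zero_iff] at hz
          exact hMesc (z, w) ⟨hz, hw1⟩ (by rw [hw]; exact hMr))
      have a1 := norm_nonneg ((ψ (1/2, w)).1 - (ψ (0, w)).1)
      have a2 := norm_nonneg ((ψ (1/2, w)).2 - (ψ (0, w)).2)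
      constructor <;> nlinarith
    have hsub : closure (ball (0:ℂ) r) ⊆ ball (0:ℂ) 1 := by
      rw [closure_ball 0 (ne_of_gt hr0)]
      exact closedBall_subset_ball hr1
    have h0cl : (0:ℂ) ∈ closure (ball (0:ℂ) r) := subset_closure (mem_ball_self hr0)
    constructor
    · have hd1 : DifferentiableOn ℂ
          (fun w : ℂ => (ψ (1/2, w)).1 - (ψ (0, w)).1) (ball (0:ℂ) 1) :=
        ((hslice2 (1/2) h12lt).fst).sub ((hslice2 0 h0lt).fst)
      have := Complex.norm_le_of_forall_mem_frontier_norm_le isBounded_ball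
        ((hd1.mono hsub).diffContOnCl)
        (fun w hw => by exact (hfront w hw).1) h0cl
      exact this
    · have hd2 : DifferentiableOn ℂ
          (fun w : ℂ => (ψ (1/2, w)).2 - (ψ (0, w)).2) (ball (0:ℂ) 1) :=
        ((hslice2 (1/2) h12lt).snd).sub ((hslice2 0 h0lt).snd)
      have := Complex.norm_le_of_forall_mem_frontier_norm_le isBounded_ball
        ((hd2.mono hsub).diffContOnCl)
        (fun w hw => by exact (hfront w hw).2) h0cl
      exact this
  have hzero : ∀ d : ℂ, (∀ ε : ℝ, 0 < ε → ‖d‖ ≤ ε) → d = 0 := by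
    intro d hd
    by_contra hne
    have h0 : 0 < ‖d‖ := norm_pos_iff.mpr hne
    have := hd (‖d‖ / 2) (by linarith)
    linarith
  have e1 : (ψ (1/2, 0)).1 = (ψ (0, 0)).1 :=
    sub_eq_zero.mp (hzero _ fun ε hε => (bound ε hε).1)
  have e2 : (ψ (1/2, 0)).2 = (ψ (0, 0)).2 :=
    sub_eq_zero.mp (hzero _ fun ε hε => (bound ε hε).2)
  have hψeq : ψ ((1/2 : ℂ), (0:ℂ)) = ψ ((0:ℂ), (0:ℂ)) := Prod.ext e1 e2
  have m1 : ((1/2 : ℂ), (0:ℂ)) ∈ polydiscC2 := ⟨h12lt, h0lt⟩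
  have m2 : ((0 : ℂ), (0:ℂ)) ∈ polydiscC2 := ⟨h0lt, h0lt⟩
  have hcontra := hφψ _ m1
  rw [hψeq, hφψ _ m2] at hcontra
  have : (0 : ℂ) = 1/2 := congrArg Prod.fst hcontra
  norm_num at this
end

section
/- There is no biholomorphic map carrying the unit sphere S³ = ∂B onto the boundary of the polydisc ∂P in ℂ²: there is no open set U ⊆ ℂ² containing S³ and injective holomorphic map φ : U → ℂ² with holomorphic inverse on φ(U) such that φ(S³) = ∂P. -/
open Complex

/-- The unit sphere `S³` in `ℂ²`, the boundary of the unit ball. -/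
def unitSphereC2 : Set (ℂ × ℂ) := {z | ‖z.1‖ ^ 2 + ‖z.2‖ ^ 2 = 1}

lemma polydisc_eq_ball : polydiscC2 = Metric.ball (0 : ℂ × ℂ) 1 := by
  ext z
  simp [polydiscC2, Metric.mem_ball, Prod.dist_eq, Complex.dist_eq, max_lt_iff, Prod.norm_def]

lemma disc_sub_frontier {w : ℂ} (hw : ‖w‖ < 1) :
    ((1 : ℂ), w) ∈ frontier polydiscC2 := by
  rw [polydisc_eq_ball, frontier_ball (0 : ℂ × ℂ) one_ne_zero]
  simp [Metric.mem_sphere, Prod.dist_eq, Complex.dist_eq, Prod.norm_def]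
  exact hw.le

lemma cs_bound {p q a b : ℂ} (h1 : ‖p‖ ^ 2 + ‖q‖ ^ 2 = 1)
    (h2 : ‖a‖ ^ 2 + ‖b‖ ^ 2 = 1) :
    ‖p * (starRingEnd ℂ) a + q * (starRingEnd ℂ) b‖ ≤ 1 := by
  have step : ‖p * (starRingEnd ℂ) a + q * (starRingEnd ℂ) b‖ ≤
      ‖p‖ * ‖a‖ + ‖q‖ * ‖b‖ := by
    refine (norm_add_le _ _).trans ?_
    simp [map_mul]
  refine step.trans ?_
  nlinarith [sq_nonneg (‖p‖ * ‖b‖ - ‖q‖ * ‖a‖),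
    sq_nonneg (‖p‖ * ‖a‖ + ‖q‖ * ‖b‖),
    norm_nonneg p, norm_nonneg q, norm_nonneg a, norm_nonneg b]

lemma cs_eq {p q a b : ℂ} (h1 : ‖p‖ ^ 2 + ‖q‖ ^ 2 = 1)
    (h2 : ‖a‖ ^ 2 + ‖b‖ ^ 2 = 1)
    (h3 : p * (starRingEnd ℂ) a + q * (starRingEnd ℂ) b = 1) : p = a ∧ q = b := by
  have e1 : p.re ^ 2 + p.im ^ 2 + (q.re ^ 2 + q.im ^ 2) = 1 := by
    rw [Complex.sq_norm, Complex.sq_norm, Complex.normSq_apply, Complex.normSq_apply] at h1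
    ring_nf at h1 ⊢; linarith
  have e2 : a.re ^ 2 + a.im ^ 2 + (b.re ^ 2 + b.im ^ 2) = 1 := by
    rw [Complex.sq_norm, Complex.sq_norm, Complex.normSq_apply, Complex.normSq_apply] at h2
    ring_nf at h2 ⊢; linarith
  have e3 : p.re * a.re + p.im * a.im + (q.re * b.re + q.im * b.im) = 1 := by
    have := congrArg Complex.re h3
    simpa [Complex.add_re, Complex.mul_re, Complex.conj_re, Complex.conj_im] using this
  have key : (p.re - a.re) ^ 2 + (p.im - a.im) ^ 2 + (q.re - b.re) ^ 2 + (q.im - b.im) ^ 2 = 0 := by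
    linear_combination e1 + e2 - 2 * e3
  have s1 := sq_nonneg (p.re - a.re)
  have s2 := sq_nonneg (p.im - a.im)
  have s3 := sq_nonneg (q.re - b.re)
  have s4 := sq_nonneg (q.im - b.im)
  have k1 : p.re = a.re := by
    have : (p.re - a.re) ^ 2 = 0 := by linarith
    have := pow_eq_zero_iff two_ne_zero |>.mp this
    linarith [sub_eq_zero.mp this]
  have k2 : p.im = a.im := by
    have : (p.im - a.im) ^ 2 = 0 := by linarith
    have := pow_eq_zero_iff two_ne_zero |>.mp this
    linarith [sub_eq_zero.mp this]
  have k3 : q.re = b.re := by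
    have : (q.re - b.re) ^ 2 = 0 := by linarith
    have := pow_eq_zero_iff two_ne_zero |>.mp this
    linarith [sub_eq_zero.mp this]
  have k4 : q.im = b.im := by
    have : (q.im - b.im) ^ 2 = 0 := by linarith
    have := pow_eq_zero_iff two_ne_zero |>.mp this
    linarith [sub_eq_zero.mp this]
  exact ⟨Complex.ext k1 k2, Complex.ext k3 k4⟩

/-- **Poincaré.** There is no biholomorphic map carrying the unit sphere `S³ = ∂B` onto the
boundary of the polydisc in `ℂ²`: there is no open set `U ⊇ S³` and injective holomorphic
`φ : U → ℂ²` with holomorphic inverse on `φ(U)` such that `φ(S³) = ∂P`. -/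
theorem no_biholomorphism_sphere_boundary_polydisc :
    ¬ ∃ (U : Set (ℂ × ℂ)) (φ ψ : ℂ × ℂ → ℂ × ℂ),
        IsOpen U ∧ unitSphereC2 ⊆ U ∧
        DifferentiableOn ℂ φ U ∧
        Set.InjOn φ U ∧
        DifferentiableOn ℂ ψ (φ '' U) ∧
        (∀ z ∈ U, ψ (φ z) = z) ∧
        φ '' unitSphereC2 = frontier polydiscC2 := by
  rintro ⟨U, φ, ψ, hU, hSU, hφ, hinj, hψ, hlinv, himg⟩
  have hdisc : ∀ w ∈ Metric.ball (0 : ℂ) 1, ((1 : ℂ), w) ∈ φ '' unitSphereC2 := by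
    intro w hw
    rw [himg]
    exact disc_sub_frontier (by simpa [Complex.dist_eq] using hw)
  have hgS : ∀ w ∈ Metric.ball (0 : ℂ) 1,
      ψ ((1 : ℂ), w) ∈ unitSphereC2 ∧ φ (ψ ((1 : ℂ), w)) = ((1 : ℂ), w) := by
    intro w hw
    obtain ⟨z, hz, hφz⟩ := hdisc w hw
    have hzU : z ∈ U := hSU hz
    have hgz : ψ ((1 : ℂ), w) = z := by rw [← hφz]; exact hlinv z hzU
    exact ⟨hgz ▸ hz, by rw [hgz, hφz]⟩
  have hgd : DifferentiableOn ℂ (fun w => ψ ((1 : ℂ), w)) (Metric.ball (0 : ℂ) 1) := by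
    apply hψ.comp (t := φ '' U) (f := fun w : ℂ => ((1 : ℂ), w))
    · exact (differentiableOn_const _).prodMk differentiableOn_id
    · intro w hw
      exact (Set.image_mono (f := φ) hSU) (hdisc w hw)
  have h0D : (0 : ℂ) ∈ Metric.ball (0 : ℂ) 1 := by simp
  have hab : ‖(ψ ((1:ℂ), 0)).1‖ ^ 2 + ‖(ψ ((1:ℂ), 0)).2‖ ^ 2 = 1 :=
    (hgS 0 h0D).1
  set h : ℂ → ℂ := fun w => (ψ ((1:ℂ), w)).1 * (starRingEnd ℂ) (ψ ((1:ℂ), 0)).1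
      + (ψ ((1:ℂ), w)).2 * (starRingEnd ℂ) (ψ ((1:ℂ), 0)).2 with hh
  have hhd : DifferentiableOn ℂ h (Metric.ball (0 : ℂ) 1) :=
    (hgd.fst.mul_const _).add (hgd.snd.mul_const _)
  have hh0 : h 0 = 1 := by
    simp only [hh, Complex.mul_conj]
    rw [← Complex.ofReal_add]
    norm_cast
    rw [Complex.normSq_eq_norm_sq, Complex.normSq_eq_norm_sq]
    exact hab
  have hmax : IsMaxOn (norm ∘ h) (Metric.ball (0 : ℂ) 1) 0 := by
    intro w hw
    simp only [Function.comp_apply, hh0]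
    have := cs_bound (hgS w hw).1 hab
    simpa [hh0] using this
  have heq : Set.EqOn h (Function.const ℂ (h 0)) (Metric.ball (0 : ℂ) 1) :=
    Complex.eqOn_of_isPreconnected_of_isMaxOn_norm (convex_ball 0 1).isPreconnected
      Metric.isOpen_ball hhd h0D hmax
  have hgconst : ∀ w ∈ Metric.ball (0 : ℂ) 1, ψ ((1:ℂ), w) = ψ ((1:ℂ), 0) := by
    intro w hw
    have hhw : h w = 1 := by rw [heq hw]; simpa using hh0
    simp only [hh] at hhw
    obtain ⟨u1, u2⟩ := cs_eq (hgS w hw).1 hab hhw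
    exact Prod.ext u1 u2
  have hhalf : (1/2 : ℂ) ∈ Metric.ball (0 : ℂ) 1 := by
    simp [Complex.dist_eq]; norm_num
  have c1 : φ (ψ ((1:ℂ), 1/2)) = ((1 : ℂ), 1/2) := (hgS _ hhalf).2
  have c2 : φ (ψ ((1:ℂ), 0)) = ((1 : ℂ), 0) := (hgS _ h0D).2
  rw [hgconst _ hhalf, c2] at c1
  have : ((1:ℂ), (0:ℂ)).2 = ((1:ℂ), (1/2:ℂ)).2 := by rw [c1]
  norm_num at this
end
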